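/- Let R be a valuation ring with fraction field K. Then GL_n(K) = GL_n(R) · T(K) · GL_n(R), i.e. every invertible n×n matrix over K can be written as k₁·t·k₂ with k₁, k₂ ∈ GL_n(R) and t ∈ T(K) a diagonal invertible matrix. -/

import Mathlib

set_option linter.unusedSectionVars false

open Matrix

section Aux

variable {R : Type*} [CommRing R] [IsDomain R] [ValuationRing R]
    {K : Type*} [Field K] [Algebra R K] [IsFractionRing R K]

private lemma exists_algebraMap_mul {a x : K} (hx : x ≠ 0)
    (h : ValuationRing.valuation R K a ≤ ValuationRing.valuation R K x) :
    ∃ r : R, a = algebraMap R K r * x := by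
  set v := ValuationRing.valuation R K
  have hvx : v x ≠ 0 := v.ne_zero_iff.mpr hx
  have h1 : v (a / x) ≤ 1 := by
    rw [map_div₀, div_eq_mul_inv]
    calc v a * (v x)⁻¹ ≤ v x * (v x)⁻¹ := mul_le_mul_left h _
      _ = 1 := mul_inv_cancel₀ hvx
  obtain ⟨r, hr⟩ := (ValuationRing.mem_integer_iff R K _).mp h1
  exact ⟨r, by rw [hr, div_mul_cancel₀ _ hx]⟩

private lemma permMatrix_map_algebraMap (ι : Type*) [Fintype ι] [DecidableEq ι]
    (σ : Equiv.Perm ι) :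
    ((σ.toPEquiv.toMatrix : Matrix ι ι R)).map (algebraMap R K) =
      (σ.toPEquiv.toMatrix : Matrix ι ι K) := by
  ext i j
  simp [PEquiv.toMatrix_apply, Matrix.map_apply, apply_ite (algebraMap R K)]

private lemma isUnit_permMatrix_det (ι : Type*) [Fintype ι] [DecidableEq ι]
    (σ : Equiv.Perm ι) :
    IsUnit ((σ.toPEquiv.toMatrix : Matrix ι ι R)).det := by
  apply Matrix.isUnit_det_of_right_inverse (B := (σ.symm.toPEquiv.toMatrix : Matrix ι ι R))
  rw [← PEquiv.toMatrix_trans, ← Equiv.toPEquiv_trans]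
  simp

private lemma diag_aux :
    ∀ (n : ℕ) (ι : Type) (_ : Fintype ι) (_ : DecidableEq ι) (_ : Fintype.card ι = n)
      (M : Matrix ι ι K),
    ∃ P Q : Matrix ι ι R, IsUnit P.det ∧ IsUnit Q.det ∧
      (P.map (algebraMap R K) * M * Q.map (algebraMap R K)).IsDiag := by
  intro n
  induction n with
  | zero =>
    intro ι _ _ hcard M
    have : IsEmpty ι := Fintype.card_eq_zero_iff.mp hcard
    exact ⟨1, 1, by simp, by simp, fun i => isEmptyElim i⟩
  | succ n ih =>
    intro ι _ _ hcard M
    set f := algebraMap R K with hf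
    obtain ⟨e⟩ : Nonempty (ι ≃ (Fin n ⊕ Unit)) :=
      Fintype.card_eq.mp (by simp [hcard])
    set M' : Matrix (Fin n ⊕ Unit) (Fin n ⊕ Unit) K := M.submatrix e.symm e.symm with hM'
    suffices h : ∃ P Q : Matrix (Fin n ⊕ Unit) (Fin n ⊕ Unit) R, IsUnit P.det ∧ IsUnit Q.det ∧
        (P.map f * M' * Q.map f).IsDiag by
      obtain ⟨P, Q, hP, hQ, hd⟩ := h
      refine ⟨P.submatrix e e, Q.submatrix e e, ?_, ?_, ?_⟩
      · rwa [Matrix.det_submatrix_equiv_self]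
      · rwa [Matrix.det_submatrix_equiv_self]
      · have heq : (P.submatrix e e).map f * M * (Q.submatrix e e).map f
            = ((P.map f) * M' * (Q.map f)).submatrix e e := by
          rw [← Matrix.submatrix_map, ← Matrix.submatrix_map]
          have hM : M'.submatrix e e = M := by
            simp [hM', Matrix.submatrix_submatrix]
          conv_lhs => rw [← hM]
          rw [Matrix.submatrix_mul_equiv (P.map f) M' e e, Matrix.submatrix_mul_equiv]
        rw [heq]
        exact hd.submatrix e.injective
    clear_value M'
    clear hM'
    by_cases h0 : M' = 0
    · exact ⟨1, 1, by simp, by simp, by simp [h0]⟩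
    -- pivot selection
    set v := ValuationRing.valuation R K with hv
    obtain ⟨p, _, hp⟩ := Finset.exists_max_image Finset.univ
      (fun q : (Fin n ⊕ Unit) × (Fin n ⊕ Unit) => v (M' q.1 q.2))
      ⟨(Sum.inr (), Sum.inr ()), Finset.mem_univ _⟩
    obtain ⟨a, b, hab⟩ : ∃ a b, M' a b ≠ 0 := by
      by_contra hc
      push_neg at hc
      exact h0 (Matrix.ext fun i j => hc i j)
    have hx : M' p.1 p.2 ≠ 0 := by
      intro hz
      have h1 := hp (a, b) (Finset.mem_univ _)
      rw [hz] at h1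
      simp only [map_zero, le_zero_iff] at h1
      exact hab (v.zero_iff.mp h1)
    -- move pivot to (inr, inr)
    set σ₁ : Equiv.Perm (Fin n ⊕ Unit) := Equiv.swap (Sum.inr ()) p.1 with hσ₁
    set σ₂ : Equiv.Perm (Fin n ⊕ Unit) := Equiv.swap (Sum.inr ()) p.2 with hσ₂
    set N : Matrix (Fin n ⊕ Unit) (Fin n ⊕ Unit) K := M'.submatrix σ₁ σ₂ with hN
    have hN00 : N (Sum.inr ()) (Sum.inr ()) = M' p.1 p.2 := by
      rw [hN]
      simp [hσ₁, hσ₂, Matrix.submatrix_apply, Equiv.swap_apply_left]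
    have hdiv : ∀ i j, ∃ r : R, N i j = f r * M' p.1 p.2 := fun i j =>
      exists_algebraMap_mul hx (hp (σ₁ i, σ₂ j) (Finset.mem_univ _))
    suffices hsuf : ∃ P Q : Matrix (Fin n ⊕ Unit) (Fin n ⊕ Unit) R, IsUnit P.det ∧ IsUnit Q.det ∧
        (P.map f * N * Q.map f).IsDiag by
      obtain ⟨P, Q, hP, hQ, hd⟩ := hsuf
      refine ⟨P * σ₁.toPEquiv.toMatrix, σ₂.symm.toPEquiv.toMatrix * Q, ?_, ?_, ?_⟩
      · rw [Matrix.det_mul]; exact hP.mul (isUnit_permMatrix_det _ _)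
      · rw [Matrix.det_mul]; exact (isUnit_permMatrix_det _ _).mul hQ
      · have hNQ : (σ₁.toPEquiv.toMatrix : Matrix _ _ K) * M' *
            (σ₂.symm.toPEquiv.toMatrix : Matrix _ _ K) = N := by
          rw [PEquiv.mul_toMatrix_toPEquiv, PEquiv.toMatrix_toPEquiv_mul, hN]
          simp [Matrix.submatrix_submatrix]
        have heq : (P * σ₁.toPEquiv.toMatrix).map f * M' *
              ((σ₂.symm.toPEquiv.toMatrix : Matrix _ _ R) * Q).map f
            = P.map f * N * Q.map f := by
          rw [Matrix.map_mul, Matrix.map_mul, permMatrix_map_algebraMap,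
            permMatrix_map_algebraMap, ← hNQ]
          noncomm_ring
        rw [heq]
        exact hd
    -- elimination
    obtain ⟨c, hc⟩ : ∃ c : Fin n → R, ∀ i, N (Sum.inl i) (Sum.inr ()) = f (c i) * M' p.1 p.2 :=
      ⟨fun i => (hdiv (Sum.inl i) (Sum.inr ())).choose,
       fun i => (hdiv (Sum.inl i) (Sum.inr ())).choose_spec⟩
    obtain ⟨d, hdd⟩ : ∃ d : Fin n → R, ∀ j, N (Sum.inr ()) (Sum.inl j) = f (d j) * M' p.1 p.2 :=
      ⟨fun j => (hdiv (Sum.inr ()) (Sum.inl j)).choose,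
       fun j => (hdiv (Sum.inr ()) (Sum.inl j)).choose_spec⟩
    set A : Matrix (Fin n) (Fin n) K := N.toBlocks₁₁ with hA
    set B : Matrix (Fin n) Unit K := N.toBlocks₁₂ with hB
    set C : Matrix Unit (Fin n) K := N.toBlocks₂₁ with hC
    set D : Matrix Unit Unit K := N.toBlocks₂₂ with hD
    have hNblocks : N = fromBlocks A B C D := (Matrix.fromBlocks_toBlocks N).symm
    set L : Matrix (Fin n ⊕ Unit) (Fin n ⊕ Unit) R :=
      fromBlocks 1 (Matrix.of fun i (_ : Unit) => -c i) 0 1 with hL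
    set U : Matrix (Fin n ⊕ Unit) (Fin n ⊕ Unit) R :=
      fromBlocks 1 0 (Matrix.of fun (_ : Unit) j => -d j) 1 with hU
    have hLdet : IsUnit L.det := by
      rw [hL, Matrix.det_fromBlocks_zero₂₁]; simp
    have hUdet : IsUnit U.det := by
      rw [hU, Matrix.det_fromBlocks_zero₁₂]; simp
    set B' : Matrix (Fin n) Unit K := (Matrix.of fun i (_ : Unit) => -c i).map f with hB'
    set C' : Matrix Unit (Fin n) K := (Matrix.of fun (_ : Unit) j => -d j).map f with hC'
    have hLmap : L.map f = fromBlocks 1 B' 0 1 := by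
      rw [hL, Matrix.fromBlocks_map]
      rw [Matrix.map_one _ (map_zero f) (map_one f), Matrix.map_one _ (map_zero f) (map_one f),
        Matrix.map_zero _ (map_zero f)]
    have hUmap : U.map f = fromBlocks 1 0 C' 1 := by
      rw [hU, Matrix.fromBlocks_map]
      rw [Matrix.map_one _ (map_zero f) (map_one f), Matrix.map_one _ (map_zero f) (map_one f),
        Matrix.map_zero _ (map_zero f)]
    have hBD : B + B' * D = 0 := by
      ext i j
      cases j
      simp only [Matrix.add_apply, Matrix.zero_apply, Matrix.mul_apply, Finset.univ_unique,
        Finset.sum_singleton, hB, hB', hD, Matrix.toBlocks₁₂, Matrix.toBlocks₂₂,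
        Matrix.of_apply, Matrix.map_apply, map_neg]
      rw [hc i, hN00]
      ring
    have hCD : C + D * C' = 0 := by
      ext i j
      cases i
      simp only [Matrix.add_apply, Matrix.zero_apply, Matrix.mul_apply, Finset.univ_unique,
        Finset.sum_singleton, hC, hC', hD, Matrix.toBlocks₂₁, Matrix.toBlocks₂₂,
        Matrix.of_apply, Matrix.map_apply, map_neg]
      rw [hdd j, hN00]
      ring
    set A₂ : Matrix (Fin n) (Fin n) K := A + B' * C with hA₂
    have hT : L.map f * N * U.map f = fromBlocks A₂ 0 0 D := by
      rw [hLmap, hUmap, hNblocks, Matrix.fromBlocks_multiply, Matrix.fromBlocks_multiply]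
      simp only [Matrix.one_mul, Matrix.zero_mul, Matrix.mul_one, Matrix.mul_zero,
        add_zero, zero_add, hBD, hCD, hA₂]
    obtain ⟨P₀, Q₀, hP₀, hQ₀, hd₀⟩ := ih (Fin n) inferInstance inferInstance (by simp) A₂
    refine ⟨fromBlocks P₀ 0 0 1 * L, U * fromBlocks Q₀ 0 0 1, ?_, ?_, ?_⟩
    · rw [Matrix.det_mul, Matrix.det_fromBlocks_zero₂₁]
      simpa using hP₀.mul hLdet
    · rw [Matrix.det_mul, Matrix.det_fromBlocks_zero₂₁]
      simpa using hUdet.mul hQ₀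
    · have hfb : (fromBlocks P₀ (0 : Matrix (Fin n) Unit R) 0 1).map f
          = fromBlocks (P₀.map f) (0 : Matrix (Fin n) Unit K) (0 : Matrix Unit (Fin n) K)
            (1 : Matrix Unit Unit K) := by
        rw [Matrix.fromBlocks_map]
        rw [Matrix.map_one _ (map_zero f) (map_one f), Matrix.map_zero _ (map_zero f),
          Matrix.map_zero _ (map_zero f)]
      have hfb' : (fromBlocks Q₀ (0 : Matrix (Fin n) Unit R) 0 1).map f
          = fromBlocks (Q₀.map f) (0 : Matrix (Fin n) Unit K) (0 : Matrix Unit (Fin n) K)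
            (1 : Matrix Unit Unit K) := by
        rw [Matrix.fromBlocks_map]
        rw [Matrix.map_one _ (map_zero f) (map_one f), Matrix.map_zero _ (map_zero f),
          Matrix.map_zero _ (map_zero f)]
      have hfinal : (fromBlocks P₀ 0 0 1 * L).map f * N * (U * fromBlocks Q₀ 0 0 1).map f
          = fromBlocks (P₀.map f * A₂ * Q₀.map f) 0 0 D := by
        rw [Matrix.map_mul, Matrix.map_mul, hfb, hfb']
        have key : fromBlocks (P₀.map f) (0 : Matrix (Fin n) Unit K) 0 1 *
            (L.map f * N * U.map f) * fromBlocks (Q₀.map f) 0 0 1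
            = fromBlocks (P₀.map f * A₂ * Q₀.map f) 0 0 D := by
          rw [hT, Matrix.fromBlocks_multiply, Matrix.fromBlocks_multiply]
          simp only [Matrix.one_mul, Matrix.zero_mul, Matrix.mul_one, Matrix.mul_zero,
            add_zero, zero_add]
        rw [← key]
        noncomm_ring
      rw [hfinal]
      exact hd₀.fromBlocks (fun i j h => absurd (Subsingleton.elim i j) h)

end Aux

/-- Let `R` be a valuation ring with fraction field `K`. Then
`GLₙ(K) = GLₙ(R) ⬝ T(K) ⬝ GLₙ(R)`: every `g ∈ GLₙ(K)` can be written as `k₁ * t * k₂` with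
`k₁, k₂ ∈ GLₙ(R)` and `t ∈ GLₙ(K)` an invertible diagonal matrix. -/
theorem GL_eq_GLR_mul_diagonal_mul_GLR {R : Type*} [CommRing R] [IsDomain R] [ValuationRing R]
    {K : Type*} [Field K] [Algebra R K] [IsFractionRing R K]
    {n : ℕ} (g : GL (Fin n) K) :
    ∃ (k₁ k₂ : GL (Fin n) R) (t : GL (Fin n) K), (t : Matrix (Fin n) (Fin n) K).IsDiag ∧
      g = (Matrix.GeneralLinearGroup.map (n := Fin n) (algebraMap R K)) k₁ * t *
        (Matrix.GeneralLinearGroup.map (n := Fin n) (algebraMap R K)) k₂ := by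
  obtain ⟨P, Q, hP, hQ, hd⟩ := diag_aux (R := R) (K := K) n (Fin n) inferInstance inferInstance
    (by simp) (g : Matrix (Fin n) (Fin n) K)
  obtain ⟨uP, huP⟩ := (Matrix.isUnit_iff_isUnit_det P).mpr hP
  obtain ⟨uQ, huQ⟩ := (Matrix.isUnit_iff_isUnit_det Q).mpr hQ
  set φ := Matrix.GeneralLinearGroup.map (n := Fin n) (algebraMap R K) with hφ
  have hcoe : ∀ u : GL (Fin n) R,
      (φ u : Matrix (Fin n) (Fin n) K) = (u : Matrix (Fin n) (Fin n) R).map (algebraMap R K) :=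
    fun u => rfl
  refine ⟨uP⁻¹, uQ⁻¹, φ uP * g * φ uQ, ?_, ?_⟩
  · have : ((φ uP * g * φ uQ : GL (Fin n) K) : Matrix (Fin n) (Fin n) K)
        = P.map (algebraMap R K) * (g : Matrix (Fin n) (Fin n) K) * Q.map (algebraMap R K) := by
      rw [Units.val_mul, Units.val_mul, hcoe, hcoe, huP, huQ]
    rw [this]
    exact hd
  · rw [map_inv, map_inv]
    group
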